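/- Under the standing hypotheses (𝒢 connected finite groupoid, θ = Ext(γ) unital, A = ⊕_{y∈𝒢₀} B_y, A a left A^θ-module, B_x a left B_x^{θ_{(x)}}-module), the following are equivalent: (i) A is a θ-partial Galois extension of A^θ and the trace map t_θ : A → A^θ is surjective; (ii) the Morita context (A^θ, A⋆_θ𝒢, A, A, Γ, Γ') is strict; (iii) the Morita context (B_x^{θ_{(x)}}, B_x ⋆_{θ_{(x)}} 𝒢(x), B_x, B_x, Γ_x, Γ'_x) is strict; (iv) B_x is a partial Galois extension of B_x^{θ_{(x)}} and t_{θ_{(x)}} is surjective. -/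

import Mathlib

open CategoryTheory

universe u v

def IsIdealIn {A : Type u} [NonUnitalRing A] (S T : Set A) : Prop :=
  S ⊆ T ∧ (0 : A) ∈ S ∧ (∀ a ∈ S, ∀ b ∈ S, a + b ∈ S) ∧ (∀ a ∈ S, -a ∈ S) ∧
    ∀ t ∈ T, ∀ s ∈ S, t * s ∈ S ∧ s * t ∈ S

structure PartialAction (G : Type v) [Groupoid G] (A : Type u) [NonUnitalRing A] where
  D : ∀ {x y : G}, (x ⟶ y) → Set A
  act : ∀ {x y : G}, (x ⟶ y) → A → A
  ideal_base : ∀ y : G, IsIdealIn (D (𝟙 y)) Set.univ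
  ideal_dom : ∀ {x y : G} (g : x ⟶ y), IsIdealIn (D g) (D (𝟙 y))
  act_mem : ∀ {x y : G} (g : x ⟶ y), ∀ a ∈ D (Groupoid.inv g), act g a ∈ D g
  act_add : ∀ {x y : G} (g : x ⟶ y), ∀ a ∈ D (Groupoid.inv g), ∀ b ∈ D (Groupoid.inv g),
    act g (a + b) = act g a + act g b
  act_mul : ∀ {x y : G} (g : x ⟶ y), ∀ a ∈ D (Groupoid.inv g), ∀ b ∈ D (Groupoid.inv g),
    act g (a * b) = act g a * act g b
  act_inj : ∀ {x y : G} (g : x ⟶ y), ∀ a ∈ D (Groupoid.inv g), ∀ b ∈ D (Groupoid.inv g),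
    act g a = act g b → a = b
  act_surj : ∀ {x y : G} (g : x ⟶ y), ∀ c ∈ D g, ∃ a ∈ D (Groupoid.inv g), act g a = c
  act_id : ∀ y : G, ∀ a ∈ D (𝟙 y), act (𝟙 y) a = a
  mem_comp : ∀ {w x y : G} (g : x ⟶ y) (h : w ⟶ x), ∀ a ∈ D (Groupoid.inv h),
    act h a ∈ D (Groupoid.inv g) ∩ D h → a ∈ D (Groupoid.inv (h ≫ g))
  act_comp : ∀ {w x y : G} (g : x ⟶ y) (h : w ⟶ x), ∀ a ∈ D (Groupoid.inv h),
    act h a ∈ D (Groupoid.inv g) ∩ D h → act g (act h a) = act (h ≫ g) a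

def IsId {G : Type v} [Groupoid G] {y z : G} (g : y ⟶ z) : Prop :=
  ∃ h : y = z, g = eqToHom h

/-- The set of morphisms of a groupoid `G`, as a sigma type. -/
abbrev Mor (G : Type v) [Groupoid G] := Σ y z : G, y ⟶ z

/-- Elements of the partial skew groupoid ring `A ⋆_θ 𝒢`. -/
def skewSet {G : Type v} [Groupoid G] {A : Type u} [NonUnitalRing A]
    (θ : PartialAction G A) : Set (Mor G → A) :=
  {r | ∀ p : Mor G, r p ∈ θ.D p.2.2}

section Defs

variable {G : Type v} [Groupoid G] {A : Type u} [NonUnitalRing A]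
  [Fintype G] [∀ y z : G, Fintype (y ⟶ z)]
  (θ : PartialAction G A) (e : ∀ {y z : G}, (y ⟶ z) → A) (x : G)

/-- The trace map `t_θ(a) = Σ_{g∈𝒢} θ_g(a·1_{g⁻¹})`. -/
def traceA (c : A) : A :=
  ∑ y : G, ∑ w : G, ∑ g : y ⟶ w, θ.act g (c * e (Groupoid.inv g))

/-- The trace map of the partial action of the isotropy group `𝒢(x)` on `B_x`. -/
def traceX (c : A) : A := ∑ h : x ⟶ x, θ.act h (c * e (Groupoid.inv h))

/-- The subring of invariants `A^θ`. -/
def invA : Set A :=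
  {a | ∀ {y z : G} (g : y ⟶ z), θ.act g (a * e (Groupoid.inv g)) = a * e g}

/-- The invariants `B_x^{θ_{(x)}}` of the isotropy partial action. -/
def invX : Set A := {a | ∀ h : x ⟶ x, θ.act h (a * e (Groupoid.inv h)) = a * e h}

/-- `A` is a `θ`-partial Galois extension of `A^θ`: there are Galois coordinates
`a_i, b_i` with `Σ_i a_i θ_g(b_i 1_{g⁻¹}) = δ_{y,g} 1_y` for all objects `y` and
morphisms `g`. -/
def GaloisA : Prop :=
  ∃ (n : ℕ) (a b : Fin n → A),
    (∀ y : G, ∑ i, a i * θ.act (𝟙 y) (b i * e (Groupoid.inv (𝟙 y))) = e (𝟙 y)) ∧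
    (∀ {y z : G} (g : y ⟶ z), ¬ IsId g →
      ∑ i, a i * θ.act g (b i * e (Groupoid.inv g)) = 0)

/-- `B_x` is a partial Galois extension of `B_x^{θ_{(x)}}`. -/
def GaloisX : Prop :=
  ∃ (n : ℕ) (a b : Fin n → A),
    (∀ i, a i ∈ θ.D (𝟙 x) ∧ b i ∈ θ.D (𝟙 x)) ∧
    (∑ i, a i * θ.act (𝟙 x) (b i * e (Groupoid.inv (𝟙 x))) = e (𝟙 x)) ∧
    (∀ h : x ⟶ x, h ≠ 𝟙 x → ∑ i, a i * θ.act h (b i * e (Groupoid.inv h)) = 0)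

/-- Strictness of the Morita context `(A^θ, A⋆_θ𝒢, A, A, Γ, Γ')`, expressed (as the
rings involved are unital) by the surjectivity of both connecting maps `Γ` and `Γ'`. -/
def StrictA : Prop :=
  (∀ a ∈ invA θ e, ∃ (n : ℕ) (u v : Fin n → A),
      a = ∑ i, traceA θ e (u i * v i)) ∧
  (∀ r ∈ skewSet θ, ∃ (n : ℕ) (a b : Fin n → A), ∀ p : Mor G,
      r p = ∑ i, a i * θ.act p.2.2 (b i * e (Groupoid.inv p.2.2)))

/-- Strictness of the Morita context
`(B_x^{θ_{(x)}}, B_x ⋆_{θ_{(x)}} 𝒢(x), B_x, B_x, Γ_x, Γ'_x)`. -/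
def StrictX : Prop :=
  (∀ a ∈ θ.D (𝟙 x), a ∈ invX θ e x → ∃ (n : ℕ) (u v : Fin n → A),
      (∀ i, u i ∈ θ.D (𝟙 x) ∧ v i ∈ θ.D (𝟙 x)) ∧
      a = ∑ i, traceX θ e x (u i * v i)) ∧
  (∀ s : (x ⟶ x) → A, (∀ h : x ⟶ x, s h ∈ θ.D h) →
    ∃ (n : ℕ) (a b : Fin n → A),
      (∀ i, a i ∈ θ.D (𝟙 x) ∧ b i ∈ θ.D (𝟙 x)) ∧
      ∀ h : x ⟶ x, s h = ∑ i, a i * θ.act h (b i * e (Groupoid.inv h)))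

end Defs

section Proof

variable {G : Type v} [Groupoid G] {A : Type u} [NonUnitalRing A]

/-- Bundled hypotheses on the idempotents `e`. -/
class Ex (e : ∀ {y z : G}, (y ⟶ z) → A) : Prop where
  idem : ∀ {y z : G} (g : y ⟶ z), e g * e g = e g
  cent : ∀ {y z : G} (g : y ⟶ z) (b : A), e g * b = b * e g

/-- Bundled hypothesis that `e g` generates the domain `D g`. -/
class DGen (θ : PartialAction G A) (e : ∀ {y z : G}, (y ⟶ z) → A) : Prop where
  gen : ∀ {y z : G} (g : y ⟶ z), θ.D g = {a : A | ∃ b : A, a = b * e g}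

variable {θ : PartialAction G A} {e : ∀ {y z : G}, (y ⟶ z) → A} [Ex e] [DGen θ e]

lemma eIdem {y z : G} (g : y ⟶ z) : e g * e g = e g := Ex.idem g

lemma eCent {y z : G} (g : y ⟶ z) (b : A) : e g * b = b * e g := Ex.cent g b

lemma memD {y z : G} {g : y ⟶ z} {a : A} : a ∈ θ.D g ↔ a * e g = a := by
  rw [DGen.gen (θ := θ) (e := e) g]
  constructor
  · rintro ⟨b, rfl⟩
    rw [mul_assoc, eIdem]
  · intro h
    exact ⟨a, h.symm⟩

lemma mulE_mem {y z : G} (g : y ⟶ z) (b : A) : b * e g ∈ θ.D g :=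
  memD.2 (by rw [mul_assoc, eIdem])

lemma eMem {y z : G} (g : y ⟶ z) : e g ∈ θ.D g := memD.2 (eIdem g)

lemma mulE_of_mem {y z : G} {g : y ⟶ z} {a : A} (h : a ∈ θ.D g) : a * e g = a := memD.1 h

lemma eMul_of_mem {y z : G} {g : y ⟶ z} {a : A} (h : a ∈ θ.D g) : e g * a = a := by
  rw [eCent, mulE_of_mem h]

include e in
lemma DmulL {y z : G} {g : y ⟶ z} {a : A} (h : a ∈ θ.D g) (b : A) : b * a ∈ θ.D g :=
  (memD (e := e)).2 (by rw [mul_assoc, mulE_of_mem h])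

include e in
lemma DmulR {y z : G} {g : y ⟶ z} {a : A} (h : a ∈ θ.D g) (b : A) : a * b ∈ θ.D g :=
  (memD (e := e)).2 (by rw [mul_assoc, ← eCent, ← mul_assoc, mulE_of_mem h])

include e in
lemma Dzero {y z : G} (g : y ⟶ z) : (0 : A) ∈ θ.D g := (memD (e := e)).2 (zero_mul _)

include e in
lemma Dadd {y z : G} {g : y ⟶ z} {a b : A} (ha : a ∈ θ.D g) (hb : b ∈ θ.D g) :
    a + b ∈ θ.D g := (memD (e := e)).2 (by rw [add_mul, mulE_of_mem ha, mulE_of_mem hb])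

include e in
lemma Dsum {ι : Type*} {s : Finset ι} {f : ι → A} {y z : G} {g : y ⟶ z}
    (h : ∀ i ∈ s, f i ∈ θ.D g) : (∑ i ∈ s, f i) ∈ θ.D g := by
  classical
  induction s using Finset.induction with
  | empty => simpa using Dzero (θ := θ) (e := e) g
  | insert _ _ hns ih =>
    rw [Finset.sum_insert hns]
    exact Dadd (e := e) (h _ (Finset.mem_insert_self _ _))
      (ih fun i hi => h i (Finset.mem_insert_of_mem hi))

omit [Ex e] [DGen θ e] in
lemma subB {y z : G} {g : y ⟶ z} {a : A} (h : a ∈ θ.D g) : a ∈ θ.D (𝟙 z) :=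
  (θ.ideal_dom g).1 h


set_option linter.unusedSectionVars false

lemma ginv_inv {y z : G} (g : y ⟶ z) : Groupoid.inv (Groupoid.inv g) = g := by simp

lemma ginv_comp {w y z : G} (g : y ⟶ z) (h : w ⟶ y) :
    Groupoid.inv (h ≫ g) = Groupoid.inv g ≫ Groupoid.inv h := by
  simp [Groupoid.inv_eq_inv]

lemma gcomp_inv {y z : G} (g : y ⟶ z) : g ≫ Groupoid.inv g = 𝟙 y := by simp

lemma ginv_gcomp {y z : G} (g : y ⟶ z) : Groupoid.inv g ≫ g = 𝟙 z := by simp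

lemma ginv_id (y : G) : Groupoid.inv (𝟙 y) = 𝟙 y := by simp

omit [Ex e] [DGen θ e] in
lemma act0 {y z : G} (g : y ⟶ z) : θ.act g 0 = 0 := by
  have h0 : (0 : A) ∈ θ.D (Groupoid.inv g) := (θ.ideal_dom _).2.1
  have := θ.act_add g 0 h0 0 h0
  simp only [add_zero] at this
  exact left_eq_add.1 this

omit [Ex e] [DGen θ e] in
lemma actInvAct {y z : G} (g : y ⟶ z) {a : A} (ha : a ∈ θ.D (Groupoid.inv g)) :
    θ.act (Groupoid.inv g) (θ.act g a) = a := by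
  have h1 : θ.act g a ∈ θ.D g := θ.act_mem g a ha
  have h2 : θ.act g a ∈ θ.D (Groupoid.inv (Groupoid.inv g)) := by rwa [ginv_inv]
  have h3 := θ.act_comp (Groupoid.inv g) g a ha ⟨h2, h1⟩
  rw [gcomp_inv] at h3
  rw [h3, θ.act_id y a (subB ha)]

omit [Ex e] [DGen θ e] in
lemma actActInv {y z : G} (g : y ⟶ z) {a : A} (ha : a ∈ θ.D g) :
    θ.act g (θ.act (Groupoid.inv g) a) = a := by
  have ha' : a ∈ θ.D (Groupoid.inv (Groupoid.inv g)) := by rwa [ginv_inv]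
  have h := actInvAct (θ := θ) (Groupoid.inv g) ha'
  rwa [ginv_inv] at h

omit [Ex e] [DGen θ e] in
lemma actMemInv {y z : G} (g : y ⟶ z) {a : A} (ha : a ∈ θ.D g) :
    θ.act (Groupoid.inv g) a ∈ θ.D (Groupoid.inv g) := by
  apply θ.act_mem (Groupoid.inv g)
  rwa [ginv_inv]

lemma actE {y z : G} (g : y ⟶ z) : θ.act g (e (Groupoid.inv g)) = e g := by
  set u := θ.act g (e (Groupoid.inv g)) with hu
  have hud : u ∈ θ.D g := θ.act_mem g _ (eMem _)
  have hw : θ.act (Groupoid.inv g) (e g) ∈ θ.D (Groupoid.inv g) := actMemInv (θ := θ) g (eMem _)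
  have h1 : e g * u = e g := by
    have hmul := θ.act_mul g _ hw _ (eMem (e := e) (Groupoid.inv g))
    rw [mulE_of_mem (e := e) hw, actActInv (θ := θ) g (eMem g)] at hmul
    exact hmul.symm
  rw [← mulE_of_mem (e := e) hud, ← eCent g u, h1]

include e in
lemma actSum {ι : Type*} (s : Finset ι) (f : ι → A) {y z : G} (g : y ⟶ z)
    (h : ∀ i ∈ s, f i ∈ θ.D (Groupoid.inv g)) :
    θ.act g (∑ i ∈ s, f i) = ∑ i ∈ s, θ.act g (f i) := by
  classical
  induction s using Finset.induction with
  | empty => simpa using act0 (θ := θ) g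
  | @insert j s hns ih =>
    rw [Finset.sum_insert hns, Finset.sum_insert hns,
      θ.act_add g _ (h _ (Finset.mem_insert_self _ _))
        _ (Dsum (e := e) fun i hi => h i (Finset.mem_insert_of_mem hi)),
      ih fun i hi => h i (Finset.mem_insert_of_mem hi)]

/-- Key multiplication lemma: `θ_g(a)·c = θ_g(a · θ_{g⁻¹}(c·1_g))`. -/
lemma kmul {y z : G} (g : y ⟶ z) {a : A} (ha : a ∈ θ.D (Groupoid.inv g)) (c : A) :
    θ.act g a * c = θ.act g (a * θ.act (Groupoid.inv g) (c * e g)) := by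
  have h1 : c * e g ∈ θ.D g := mulE_mem g c
  have h2 : θ.act (Groupoid.inv g) (c * e g) ∈ θ.D (Groupoid.inv g) := actMemInv (θ := θ) g h1
  have h3 : θ.act g a * c = θ.act g a * (c * e g) := by
    conv_lhs => rw [← mulE_of_mem (e := e) (θ.act_mem g a ha)]
    rw [mul_assoc, eCent g c]
  rw [h3, θ.act_mul g a ha _ h2, actActInv (θ := θ) g h1]

omit [Ex e] [DGen θ e] in
lemma compMem {w y z : G} (g : y ⟶ z) (h : z ⟶ w) {a : A}
    (h1 : a ∈ θ.D (Groupoid.inv g)) (h2 : a ∈ θ.D (Groupoid.inv (g ≫ h))) :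
    θ.act g a ∈ θ.D (Groupoid.inv h) := by
  obtain ⟨b, hb, hba⟩ := θ.act_surj (Groupoid.inv (g ≫ h)) a h2
  rw [ginv_inv] at hb
  rw [ginv_comp] at hba
  have hbm : b ∈ θ.D (Groupoid.inv (Groupoid.inv h ≫ Groupoid.inv g)) := by
    rw [ginv_comp, ginv_inv, ginv_inv]; exact hb
  have hcond : θ.act (Groupoid.inv h ≫ Groupoid.inv g) b ∈
      θ.D (Groupoid.inv g) ∩ θ.D (Groupoid.inv h ≫ Groupoid.inv g) := by
    rw [hba]; exact ⟨h1, by rw [← ginv_comp]; exact h2⟩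
  have hac := θ.act_comp g (Groupoid.inv h ≫ Groupoid.inv g) b hbm hcond
  rw [hba] at hac
  have hsimp : (Groupoid.inv h ≫ Groupoid.inv g) ≫ g = Groupoid.inv h := by simp
  rw [hsimp] at hac
  have hbh : b ∈ θ.D (Groupoid.inv (Groupoid.inv h)) := by
    have := θ.mem_comp g (Groupoid.inv h ≫ Groupoid.inv g) b hbm hcond
    rwa [hsimp] at this
  rw [hac]
  exact θ.act_mem (Groupoid.inv h) b hbh

omit [Ex e] [DGen θ e] in
lemma compAct {w y z : G} (g : y ⟶ z) (h : z ⟶ w) {a : A}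
    (h1 : a ∈ θ.D (Groupoid.inv g)) (h2 : a ∈ θ.D (Groupoid.inv (g ≫ h))) :
    θ.act h (θ.act g a) = θ.act (g ≫ h) a :=
  θ.act_comp h g a h1 ⟨compMem g h h1 h2, θ.act_mem g a h1⟩

/-- Two generating central idempotents of equal domains coincide. -/
lemma eExt {y z y' z' : G} {g : y ⟶ z} {g' : y' ⟶ z'} (hD : θ.D g = θ.D g') :
    e g = e g' := by
  have h1 : e g ∈ θ.D g' := hD ▸ eMem (e := e) g
  have h2 : e g' ∈ θ.D g := hD ▸ eMem (e := e) g'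
  rw [← mulE_of_mem (e := e) h1, eCent g (e g'), mulE_of_mem (e := e) h2]

/-- GL4: transport of idempotents along partial isomorphisms:
`θ_{k⁻¹}(1_l · 1_k) = 1_{k⁻¹} · 1_{l ≫ k⁻¹}`. -/
lemma gl4 {p q r : G} (k : p ⟶ q) (l : r ⟶ q) :
    θ.act (Groupoid.inv k) (e l * e k) = e (Groupoid.inv k) * e (l ≫ Groupoid.inv k) := by
  set w₀ : A := e l * e k with hw₀
  have hw₀k : w₀ ∈ θ.D k := DmulL (e := e) (eMem k) (e l)
  have hw₀l : w₀ ∈ θ.D l := DmulR (e := e) (eMem l) (e k)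
  have hw₀' : w₀ ∈ θ.D (Groupoid.inv (Groupoid.inv k)) := by rwa [ginv_inv]
  set m : A := θ.act (Groupoid.inv k) w₀ with hm₀
  have hm : m ∈ θ.D (Groupoid.inv k) := θ.act_mem (Groupoid.inv k) w₀ hw₀'
  -- m is central
  have mcent : ∀ t : A, t * m = m * t := by
    intro t
    have h1 : t * e (Groupoid.inv k) ∈ θ.D (Groupoid.inv k) := mulE_mem _ t
    set s : A := θ.act k (t * e (Groupoid.inv k)) with hs
    have hsD : s ∈ θ.D k := θ.act_mem k _ h1
    have hsD' : s ∈ θ.D (Groupoid.inv (Groupoid.inv k)) := by rwa [ginv_inv]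
    have h2 : θ.act (Groupoid.inv k) s = t * e (Groupoid.inv k) := actInvAct (θ := θ) k h1
    have hsw : s * w₀ = w₀ * s := by
      rw [hw₀, ← mul_assoc, ← eCent l s, mul_assoc, ← eCent k s, ← mul_assoc]
    calc t * m = (t * e (Groupoid.inv k)) * m := by
          rw [mul_assoc, eMul_of_mem (e := e) hm]
      _ = θ.act (Groupoid.inv k) s * θ.act (Groupoid.inv k) w₀ := by rw [h2]
      _ = θ.act (Groupoid.inv k) (s * w₀) := (θ.act_mul (Groupoid.inv k) s hsD' w₀ hw₀').symm
      _ = θ.act (Groupoid.inv k) (w₀ * s) := by rw [hsw]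
      _ = m * θ.act (Groupoid.inv k) s := θ.act_mul (Groupoid.inv k) w₀ hw₀' s hsD'
      _ = m * (t * e (Groupoid.inv k)) := by rw [h2]
      _ = m * t := by rw [← eCent (Groupoid.inv k) t, ← mul_assoc, mulE_of_mem (e := e) hm]
  -- m ∈ D (l ≫ k⁻¹)
  have hw₀l' : w₀ ∈ θ.D (Groupoid.inv (Groupoid.inv l)) := by rwa [ginv_inv]
  set w₁ : A := θ.act (Groupoid.inv l) w₀ with hw₁def
  have hw₁ : w₁ ∈ θ.D (Groupoid.inv l) := θ.act_mem (Groupoid.inv l) w₀ hw₀l'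
  have hl : θ.act l w₁ = w₀ := actActInv (θ := θ) l hw₀l
  have hcond : θ.act l w₁ ∈ θ.D (Groupoid.inv (Groupoid.inv k)) ∩ θ.D l := by
    rw [hl]; exact ⟨hw₀', hw₀l⟩
  have hml : m = θ.act (l ≫ Groupoid.inv k) w₁ := by
    have := θ.act_comp (Groupoid.inv k) l w₁ hw₁ hcond
    rw [hl] at this
    exact this
  have hw₁m : w₁ ∈ θ.D (Groupoid.inv (l ≫ Groupoid.inv k)) :=
    θ.mem_comp (Groupoid.inv k) l w₁ hw₁ hcond
  have hmD : m ∈ θ.D (l ≫ Groupoid.inv k) := by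
    rw [hml]; exact θ.act_mem _ w₁ hw₁m
  -- the target idempotent v
  set v : A := e (Groupoid.inv k) * e (l ≫ Groupoid.inv k) with hv
  have hv1 : v ∈ θ.D (Groupoid.inv k) := DmulR (e := e) (eMem _) _
  have hv2 : v ∈ θ.D (l ≫ Groupoid.inv k) := DmulL (e := e) (eMem _) _
  -- v * m = v
  have hvm : v * m = v := by
    set σ : A := θ.act k v with hσdef
    have hσ : σ ∈ θ.D k := θ.act_mem k v hv1
    have hσ' : σ ∈ θ.D (Groupoid.inv (Groupoid.inv k)) := by rwa [ginv_inv]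
    have hback : θ.act (Groupoid.inv k) σ = v := actInvAct (θ := θ) k hv1
    obtain ⟨ρ, hρ1, hρ2⟩ := θ.act_surj (l ≫ Groupoid.inv k) v hv2
    have hρcond : θ.act (l ≫ Groupoid.inv k) ρ ∈
        θ.D (Groupoid.inv k) ∩ θ.D (l ≫ Groupoid.inv k) := by
      rw [hρ2]; exact ⟨hv1, hv2⟩
    have hσeq : σ = θ.act ((l ≫ Groupoid.inv k) ≫ k) ρ := by
      have := θ.act_comp k (l ≫ Groupoid.inv k) ρ hρ1 hρcond
      rw [hρ2] at this
      exact this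
    have hρmem := θ.mem_comp k (l ≫ Groupoid.inv k) ρ hρ1 hρcond
    have hcompl : (l ≫ Groupoid.inv k) ≫ k = l := by simp
    have hσl : σ ∈ θ.D l := by
      rw [hσeq]
      have := θ.act_mem ((l ≫ Groupoid.inv k) ≫ k) ρ hρmem
      rwa [hcompl] at this ⊢
    have hσw : σ * w₀ = σ := by
      rw [hw₀, ← mul_assoc, mulE_of_mem hσl, mulE_of_mem hσ]
    calc v * m = θ.act (Groupoid.inv k) σ * θ.act (Groupoid.inv k) w₀ := by rw [hback]
      _ = θ.act (Groupoid.inv k) (σ * w₀) := (θ.act_mul (Groupoid.inv k) σ hσ' w₀ hw₀').symm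
      _ = θ.act (Groupoid.inv k) σ := by rw [hσw]
      _ = v := hback
  -- m * v = m
  have hmv : m * v = m := by
    rw [hv, ← mul_assoc, mulE_of_mem hm, mulE_of_mem hmD]
  calc m = m * v := hmv.symm
    _ = v * m := (mcent v).symm
    _ = v := hvm

lemma ePull {y z : G} (g : y ⟶ z) (a b : A) : a * e g * b = a * b * e g := by
  rw [mul_assoc, eCent g b, ← mul_assoc]

omit [Ex e] [DGen θ e] in
lemma glD {p q r : G} (v : p ⟶ q) (hv1 : θ.D v = θ.D (𝟙 q))
    (hv2 : θ.D (Groupoid.inv v) = θ.D (𝟙 p)) (h : q ⟶ r) :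
    θ.D (v ≫ h) = θ.D h := by
  apply le_antisymm
  · intro a ha
    obtain ⟨b, hb, hba⟩ := θ.act_surj (v ≫ h) a ha
    have hb1 : b ∈ θ.D (Groupoid.inv v) := by
      rw [hv2]; exact subB hb
    have hmem := compMem v h hb1 hb
    have hact := compAct v h hb1 hb
    rw [hba] at hact
    rw [← hact]
    exact θ.act_mem h _ hmem
  · intro a ha
    have ha' : a ∈ θ.D (Groupoid.inv (Groupoid.inv h)) := by rwa [ginv_inv]
    have hai : θ.act (Groupoid.inv h) a ∈ θ.D (Groupoid.inv h) := actMemInv (θ := θ) h ha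
    have hcond : θ.act (Groupoid.inv h) a ∈
        θ.D (Groupoid.inv (Groupoid.inv v)) ∩ θ.D (Groupoid.inv h) := by
      refine ⟨?_, hai⟩
      rw [ginv_inv, hv1]
      exact subB hai
    have := θ.mem_comp (Groupoid.inv v) (Groupoid.inv h) a ha' hcond
    have hsimp : Groupoid.inv (Groupoid.inv h ≫ Groupoid.inv v) = v ≫ h := by
      rw [ginv_comp, ginv_inv, ginv_inv]
    rwa [hsimp] at this

lemma glE {p q r : G} (v : p ⟶ q) (hv1 : θ.D v = θ.D (𝟙 q))
    (hv2 : θ.D (Groupoid.inv v) = θ.D (𝟙 p)) (h : q ⟶ r) :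
    e (v ≫ h) = e h :=
  eExt (glD v hv1 hv2 h)

lemma glAct {p q r : G} (v : q ⟶ p) (hv1 : θ.D v = θ.D (𝟙 p))
    (hv2 : θ.D (Groupoid.inv v) = θ.D (𝟙 q)) (k : r ⟶ q) :
    θ.act v (e k) = e (k ≫ v) := by
  have hek : e k ∈ θ.D (Groupoid.inv v) := by
    rw [hv2]; exact subB (eMem (θ := θ) (e := e) k)
  have h4 := gl4 (θ := θ) (e := e) (Groupoid.inv v) k
  rw [ginv_inv] at h4
  rw [mulE_of_mem hek] at h4
  rw [h4]
  refine eMul_of_mem (θ := θ) (e := e) ?_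
  rw [hv1]
  exact subB (eMem (θ := θ) (e := e) (k ≫ v))

/-- The key bilinear formula: a product of two "twisted" terms collapses through
the Galois-type sum at `k = h ≫ g⁻¹`. -/
lemma Tformula {y z y' : G} (g : y ⟶ z) (h : y' ⟶ z) (n : ℕ) (a b : Fin n → A) :
    ∑ i, θ.act g (a i * e (Groupoid.inv g)) * θ.act h (b i * e (Groupoid.inv h))
      = θ.act g ((∑ i, a i * θ.act (h ≫ Groupoid.inv g)
            (b i * e (Groupoid.inv (h ≫ Groupoid.inv g)))) *
          (e (Groupoid.inv g) * e (h ≫ Groupoid.inv g))) := by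
  set k : y' ⟶ y := h ≫ Groupoid.inv g with hk
  have hinvk : Groupoid.inv k = g ≫ Groupoid.inv h := by
    rw [hk, ginv_comp, ginv_inv]
  have hinvhk : Groupoid.inv h ≫ k = Groupoid.inv g := by
    rw [hk, ← Category.assoc, ginv_gcomp, Category.id_comp]
  have hM : e (Groupoid.inv g) * e k ∈ θ.D (Groupoid.inv g) :=
    DmulR (e := e) (eMem _) _
  have hpt : ∀ i, θ.act g (a i * e (Groupoid.inv g)) * θ.act h (b i * e (Groupoid.inv h))
      = θ.act g ((a i * θ.act k (b i * e (Groupoid.inv k))) *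
          (e (Groupoid.inv g) * e k)) := by
    intro i
    set W : A := b i * (e (Groupoid.inv h) * e (Groupoid.inv k)) with hW
    have hW1 : W ∈ θ.D (Groupoid.inv h) :=
      DmulL (e := e) (DmulR (e := e) (eMem _) _) _
    have hWk : W ∈ θ.D (Groupoid.inv k) :=
      DmulL (e := e) (DmulL (e := e) (eMem _) _) _
    have hbh : b i * e (Groupoid.inv h) ∈ θ.D (Groupoid.inv h) := mulE_mem _ _
    have step1 : θ.act h (b i * e (Groupoid.inv h)) * e g = θ.act h W := by
      rw [kmul (e := e) h hbh (e g), gl4 (θ := θ) (e := e) h g]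
      congr 1
      rw [hW, hinvk, mul_assoc, ← mul_assoc (e (Groupoid.inv h)), eIdem]
    have hag : a i * e (Groupoid.inv g) ∈ θ.D (Groupoid.inv g) := mulE_mem _ _
    have step2 : θ.act g (a i * e (Groupoid.inv g)) * θ.act h (b i * e (Groupoid.inv h))
        = θ.act g (a i * e (Groupoid.inv g) * θ.act (Groupoid.inv g) (θ.act h W)) := by
      rw [kmul (e := e) g hag, step1]
    have hWinvk' : W ∈ θ.D (Groupoid.inv (h ≫ Groupoid.inv g)) := by rw [← hk]; exact hWk
    have step3 : θ.act (Groupoid.inv g) (θ.act h W) = θ.act k W := by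
      rw [compAct h (Groupoid.inv g) hW1 hWinvk', ← hk]
    have hsplit : (b i * e (Groupoid.inv k)) * (e (Groupoid.inv h) * e (Groupoid.inv k)) = W := by
      rw [hW, mul_assoc, ← mul_assoc (e (Groupoid.inv k)),
        eCent (Groupoid.inv k) (e (Groupoid.inv h)), mul_assoc (e (Groupoid.inv h)), eIdem]
    have hgl : θ.act k (e (Groupoid.inv h) * e (Groupoid.inv k)) = e k * e (Groupoid.inv g) := by
      have h4 := gl4 (θ := θ) (e := e) (Groupoid.inv k) (Groupoid.inv h)
      rw [ginv_inv] at h4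
      rw [h4, hinvhk]
    have step4 : θ.act k W = θ.act k (b i * e (Groupoid.inv k)) * (e k * e (Groupoid.inv g)) := by
      rw [← hsplit, θ.act_mul k _ (mulE_mem _ _) _ (DmulL (e := e) (eMem _) _), hgl]
    rw [step2, step3, step4]
    congr 1
    set X : A := θ.act k (b i * e (Groupoid.inv k)) with hX
    rw [← mul_assoc, ePull (Groupoid.inv g) (a i) X, mul_assoc (a i * X)]
    congr 1
    rw [eCent k (e (Groupoid.inv g)), ← mul_assoc, eIdem]
  calc ∑ i, θ.act g (a i * e (Groupoid.inv g)) * θ.act h (b i * e (Groupoid.inv h))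
      = ∑ i, θ.act g ((a i * θ.act k (b i * e (Groupoid.inv k))) *
          (e (Groupoid.inv g) * e k)) := Finset.sum_congr rfl (fun i _ => hpt i)
    _ = θ.act g (∑ i, (a i * θ.act k (b i * e (Groupoid.inv k))) *
          (e (Groupoid.inv g) * e k)) :=
        (actSum (e := e) Finset.univ _ g (fun i _ => DmulL (e := e) hM _)).symm
    _ = θ.act g ((∑ i, a i * θ.act k (b i * e (Groupoid.inv k))) *
          (e (Groupoid.inv g) * e k)) := by rw [Finset.sum_mul]

/-- Core trace-invariance identity:
`θ_g(θ_h(c·1_{h⁻¹})·1_{g⁻¹}) = θ_{hg}(c·1_{(hg)⁻¹})·1_g`. -/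
lemma coreT {w y z : G} (h : w ⟶ y) (g : y ⟶ z) (c : A) :
    θ.act g (θ.act h (c * e (Groupoid.inv h)) * e (Groupoid.inv g))
      = θ.act (h ≫ g) (c * e (Groupoid.inv (h ≫ g))) * e g := by
  have hch : c * e (Groupoid.inv h) ∈ θ.D (Groupoid.inv h) := mulE_mem _ _
  have hchg : c * e (Groupoid.inv (h ≫ g)) ∈ θ.D (Groupoid.inv (h ≫ g)) := mulE_mem _ _
  set W : A := c * (e (Groupoid.inv h) * e (Groupoid.inv (h ≫ g))) with hW
  have hW1 : W ∈ θ.D (Groupoid.inv h) := DmulL (e := e) (DmulR (e := e) (eMem _) _) _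
  have hW2 : W ∈ θ.D (Groupoid.inv (h ≫ g)) := DmulL (e := e) (DmulL (e := e) (eMem _) _) _
  have hsimp : g ≫ Groupoid.inv (h ≫ g) = Groupoid.inv h := by
    rw [ginv_comp, ← Category.assoc, gcomp_inv, Category.id_comp]
  have l1 : θ.act h (c * e (Groupoid.inv h)) * e (Groupoid.inv g) = θ.act h W := by
    rw [kmul (e := e) h hch (e (Groupoid.inv g)), gl4 (θ := θ) (e := e) h (Groupoid.inv g)]
    congr 1
    rw [hW, ← ginv_comp, mul_assoc, ← mul_assoc (e (Groupoid.inv h)), eIdem]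
  rw [l1, compAct h g hW1 hW2, kmul (e := e) (h ≫ g) hchg (e g), gl4 (θ := θ) (e := e) (h ≫ g) g, hsimp]
  congr 1
  rw [hW, mul_assoc, ← mul_assoc (e (Groupoid.inv (h ≫ g))), eIdem,
    eCent (Groupoid.inv (h ≫ g)) (e (Groupoid.inv h))]

/-- Post-composition equivalence of hom-sets. -/
@[simps] def compEquiv {w y z : G} (g : y ⟶ z) : (w ⟶ y) ≃ (w ⟶ z) where
  toFun h := h ≫ g
  invFun h' := h' ≫ Groupoid.inv g
  left_inv h := by simp
  right_inv h' := by simp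

/-- Pre-composition equivalence of hom-sets. -/
@[simps] def precompEquiv {p q r : G} (v : p ⟶ q) : (q ⟶ r) ≃ (p ⟶ r) where
  toFun h := v ≫ h
  invFun h' := Groupoid.inv v ≫ h'
  left_inv h := by simp
  right_inv h' := by simp

variable [Fintype G] [∀ y z : G, Fintype (y ⟶ z)]

/-- Bundled "geometric" hypotheses: group-type action, orthogonal decomposition. -/
class Geo (θ : PartialAction G A) (x : G) (τ : ∀ y : G, x ⟶ y) : Prop where
  hτx : τ x = 𝟙 x
  hgt1 : ∀ y : G, θ.D (Groupoid.inv (τ y)) = θ.D (𝟙 x)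
  hgt2 : ∀ y : G, θ.D (τ y) = θ.D (𝟙 y)
  horth : ∀ y z : G, y ≠ z → ∀ a ∈ θ.D (𝟙 y), ∀ b ∈ θ.D (𝟙 z), a * b = 0
  hspan : ∀ a : A, ∃ f : G → A, (∀ y : G, f y ∈ θ.D (𝟙 y)) ∧ a = ∑ y : G, f y

variable {x : G} {τ : ∀ y : G, x ⟶ y} [Geo θ x τ]

include θ τ in
lemma eTau (y : G) : e (τ y) = e (𝟙 y) := eExt (Geo.hgt2 (θ := θ) (x := x) (τ := τ) y)

include θ τ in
lemma eTauInv (y : G) : e (Groupoid.inv (τ y)) = e (𝟙 x) := eExt (Geo.hgt1 (θ := θ) (τ := τ) y)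

include τ in
omit [Ex e] [DGen θ e] in
lemma sumOrthL (F : G → A) (hF : ∀ w, F w ∈ θ.D (𝟙 w)) {q : G} {c : A}
    (hc : c ∈ θ.D (𝟙 q)) : ∑ w, F w * c = F q * c :=
  Finset.sum_eq_single_of_mem q (Finset.mem_univ q)
    (fun w _ hw => Geo.horth (τ := τ) w q hw (F w) (hF w) c hc)

-- trace additivity
lemma traceA_add (c d : A) : traceA θ e (c + d) = traceA θ e c + traceA θ e d := by
  simp only [traceA]
  rw [← Finset.sum_add_distrib]
  refine Finset.sum_congr rfl fun y _ => ?_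
  rw [← Finset.sum_add_distrib]
  refine Finset.sum_congr rfl fun w _ => ?_
  rw [← Finset.sum_add_distrib]
  refine Finset.sum_congr rfl fun g _ => ?_
  rw [add_mul]
  exact θ.act_add g _ (mulE_mem _ _) _ (mulE_mem _ _)

lemma traceA_zero : traceA θ e (0 : A) = 0 := by
  simp only [traceA, zero_mul]
  simp [act0 (θ := θ)]

lemma traceA_sum {ι : Type*} (s : Finset ι) (f : ι → A) :
    traceA θ e (∑ i ∈ s, f i) = ∑ i ∈ s, traceA θ e (f i) := by
  classical
  induction s using Finset.induction with
  | empty => simpa using traceA_zero (θ := θ) (e := e)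
  | @insert j s hns ih =>
    rw [Finset.sum_insert hns, Finset.sum_insert hns, traceA_add, ih]

lemma traceX_add (c d : A) :
    traceX θ e x (c + d) = traceX θ e x c + traceX θ e x d := by
  simp only [traceX]
  rw [← Finset.sum_add_distrib]
  refine Finset.sum_congr rfl fun h _ => ?_
  rw [add_mul]
  exact θ.act_add h _ (mulE_mem _ _) _ (mulE_mem _ _)

lemma traceX_zero : traceX θ e x (0 : A) = 0 := by
  simp only [traceX, zero_mul]
  simp [act0 (θ := θ)]

lemma traceX_sum {ι : Type*} (s : Finset ι) (f : ι → A) :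
    traceX θ e x (∑ i ∈ s, f i) = ∑ i ∈ s, traceX θ e x (f i) := by
  classical
  induction s using Finset.induction with
  | empty => simpa using traceX_zero (θ := θ) (e := e) (x := x)
  | @insert j s hns ih =>
    rw [Finset.sum_insert hns, Finset.sum_insert hns, traceX_add, ih]

include τ in
/-- The trace of any element is `θ`-invariant. -/
lemma traceA_inv (c : A) : traceA θ e c ∈ invA θ e := by
  simp only [invA, Set.mem_setOf_eq]
  intro y z g
  have h1 : traceA θ e c * e (Groupoid.inv g)
      = ∑ w₁, ∑ h : w₁ ⟶ y, θ.act h (c * e (Groupoid.inv h)) * e (Groupoid.inv g) := by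
    rw [traceA, Finset.sum_mul]
    refine Finset.sum_congr rfl fun w₁ _ => ?_
    rw [Finset.sum_mul, Finset.sum_eq_single_of_mem y (Finset.mem_univ y)
      (fun w₂ _ hw₂ => ?_)]
    · rw [Finset.sum_mul]
    · rw [Finset.sum_mul]
      exact Finset.sum_eq_zero fun h _ => Geo.horth (τ := τ) w₂ y hw₂ _
        (subB (θ.act_mem h _ (mulE_mem _ _))) _ (subB (eMem (θ := θ) (e := e) _))
  have h2 : traceA θ e c * e g
      = ∑ w₁, ∑ h : w₁ ⟶ z, θ.act h (c * e (Groupoid.inv h)) * e g := by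
    rw [traceA, Finset.sum_mul]
    refine Finset.sum_congr rfl fun w₁ _ => ?_
    rw [Finset.sum_mul, Finset.sum_eq_single_of_mem z (Finset.mem_univ z)
      (fun w₂ _ hw₂ => ?_)]
    · rw [Finset.sum_mul]
    · rw [Finset.sum_mul]
      exact Finset.sum_eq_zero fun h _ => Geo.horth (τ := τ) w₂ z hw₂ _
        (subB (θ.act_mem h _ (mulE_mem _ _))) _ (subB (eMem (θ := θ) (e := e) _))
  rw [h1, h2]
  rw [actSum (e := e) Finset.univ _ g
    (fun w₁ _ => Dsum (e := e) fun h _ => mulE_mem _ _)]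
  refine Finset.sum_congr rfl fun w₁ _ => ?_
  rw [actSum (e := e) Finset.univ _ g (fun h _ => mulE_mem _ _)]
  rw [← Equiv.sum_comp (compEquiv (w := w₁) g) (fun h' => θ.act h' (c * e (Groupoid.inv h')) * e g)]
  refine Finset.sum_congr rfl fun h _ => ?_
  simp only [compEquiv_apply]
  exact coreT h g c

include τ in
/-- An invariant element is determined by its `x`-component. -/
lemma inv_determined {a : A} (ha : a ∈ invA θ e) :
    a = ∑ y, θ.act (τ y) (a * e (𝟙 x)) := by
  obtain ⟨f, hf, hsum⟩ := Geo.hspan (θ := θ) (x := x) (τ := τ) a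
  simp only [invA, Set.mem_setOf_eq] at ha
  have hy : ∀ y : G, θ.act (τ y) (a * e (𝟙 x)) = f y := by
    intro y
    have h1 := ha (τ y)
    rw [eTauInv (θ := θ) (e := e) (τ := τ) y, eTau (θ := θ) (e := e) (τ := τ) y] at h1
    rw [h1, hsum, Finset.sum_mul, Finset.sum_eq_single_of_mem y (Finset.mem_univ y)
      (fun w _ hw => Geo.horth (τ := τ) w y hw _ (hf w) _ (subB (eMem (θ := θ) (e := e) _)))]
    exact mulE_of_mem (hf y)
  rw [Finset.sum_congr rfl fun y _ => hy y]
  exact hsum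

include τ in
lemma inv_ext {a b : A} (ha : a ∈ invA θ e) (hb : b ∈ invA θ e)
    (hx : a * e (𝟙 x) = b * e (𝟙 x)) : a = b := by
  rw [inv_determined (τ := τ) ha, inv_determined (τ := τ) hb, hx]

include τ in
/-- Invariance of the globalized element `Σ_y θ_{τ_y}(a)` for `a ∈ B_x^{θ_(x)}`. -/
lemma invA_of_invX {a : A} (ha : a ∈ θ.D (𝟙 x))
    (hinv : ∀ h : x ⟶ x, θ.act h (a * e (Groupoid.inv h)) = a * e h) :
    (∑ y, θ.act (τ y) a) ∈ invA θ e := by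
  have haτ : ∀ w, a ∈ θ.D (Groupoid.inv (τ w)) := fun w => by
    rw [Geo.hgt1 (θ := θ) (τ := τ) w]; exact ha
  have hbase : ∀ w, θ.act (τ w) a ∈ θ.D (𝟙 w) := fun w => subB (θ.act_mem _ _ (haτ w))
  simp only [invA, Set.mem_setOf_eq]
  intro y z g
  rw [Finset.sum_mul, sumOrthL (τ := τ) _ hbase (subB (eMem (θ := θ) (e := e) (Groupoid.inv g))),
    Finset.sum_mul, sumOrthL (τ := τ) _ hbase (subB (eMem (θ := θ) (e := e) g))]
  set h₀ : x ⟶ x := (τ y ≫ g) ≫ Groupoid.inv (τ z) with hh₀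
  have hcomp : h₀ ≫ τ z = τ y ≫ g := by rw [hh₀]; simp
  have hv1z : θ.D (Groupoid.inv (τ z)) = θ.D (𝟙 x) := Geo.hgt1 (θ := θ) (τ := τ) z
  have hv2z : θ.D (Groupoid.inv (Groupoid.inv (τ z))) = θ.D (𝟙 z) := by
    rw [ginv_inv]; exact Geo.hgt2 (θ := θ) (τ := τ) z
  have hinvexp : Groupoid.inv (τ y ≫ g) = Groupoid.inv (τ z) ≫ Groupoid.inv h₀ := by
    rw [← hcomp, ginv_comp]
  have hDeq : θ.D (Groupoid.inv (τ y ≫ g)) = θ.D (Groupoid.inv h₀) := by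
    rw [hinvexp]; exact glD _ hv1z hv2z _
  have hEeq : e (Groupoid.inv (τ y ≫ g)) = e (Groupoid.inv h₀) := by
    rw [hinvexp]; exact glE _ hv1z hv2z _
  have s1 : θ.act (τ y) a * e (Groupoid.inv g) = θ.act (τ y) (a * e (Groupoid.inv h₀)) := by
    rw [kmul (e := e) (τ y) (haτ y) (e (Groupoid.inv g)),
      gl4 (θ := θ) (e := e) (τ y) (Groupoid.inv g), ← ginv_comp, hEeq,
      ← mul_assoc, mulE_of_mem (haτ y)]
  have hmem1 : a * e (Groupoid.inv h₀) ∈ θ.D (Groupoid.inv (τ y)) := by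
    rw [Geo.hgt1 (θ := θ) (τ := τ) y]; exact DmulR (e := e) ha _
  have hmem2 : a * e (Groupoid.inv h₀) ∈ θ.D (Groupoid.inv (τ y ≫ g)) := by
    rw [hDeq]; exact mulE_mem _ _
  have s2 : θ.act g (θ.act (τ y) (a * e (Groupoid.inv h₀)))
      = θ.act (τ y ≫ g) (a * e (Groupoid.inv h₀)) :=
    compAct (τ y) g hmem1 hmem2
  have hmem3 : a * e (Groupoid.inv h₀) ∈ θ.D (Groupoid.inv h₀) := mulE_mem _ _
  have hmem4 : a * e (Groupoid.inv h₀) ∈ θ.D (Groupoid.inv (h₀ ≫ τ z)) := by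
    rw [hcomp]; exact hmem2
  have s3 : θ.act (τ z) (θ.act h₀ (a * e (Groupoid.inv h₀)))
      = θ.act (h₀ ≫ τ z) (a * e (Groupoid.inv h₀)) :=
    compAct h₀ (τ z) hmem3 hmem4
  have s4 : θ.act (τ z) a * e g = θ.act (τ z) (a * e (g ≫ Groupoid.inv (τ z))) := by
    rw [kmul (e := e) (τ z) (haτ z) (e g), gl4 (θ := θ) (e := e) (τ z) g,
      ← mul_assoc, mulE_of_mem (haτ z)]
  have hEh₀ : e h₀ = e (g ≫ Groupoid.inv (τ z)) := by
    have hassoc : h₀ = τ y ≫ (g ≫ Groupoid.inv (τ z)) := by rw [hh₀]; simp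
    rw [hassoc]
    exact glE (τ y) (Geo.hgt2 (θ := θ) (τ := τ) y) (Geo.hgt1 (θ := θ) (τ := τ) y) _
  rw [s1, s2, ← hcomp, ← s3, hinv h₀, s4, hEh₀]

include τ in
/-- Restriction of the global trace to the `x`-component is a local trace. -/
lemma traceA_restrict (c : A) :
    traceA θ e c * e (𝟙 x)
      = traceX θ e x (∑ y, θ.act (Groupoid.inv (τ y)) (c * e (τ y))) := by
  have lhs : traceA θ e c * e (𝟙 x)
      = ∑ y, ∑ g : y ⟶ x, θ.act g (c * e (Groupoid.inv g)) := by
    rw [traceA, Finset.sum_mul]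
    refine Finset.sum_congr rfl fun y _ => ?_
    rw [Finset.sum_mul, Finset.sum_eq_single_of_mem x (Finset.mem_univ x)
      (fun w _ hw => ?_)]
    · rw [Finset.sum_mul]
      exact Finset.sum_congr rfl fun g _ =>
        mulE_of_mem (subB (θ.act_mem g _ (mulE_mem _ _)))
    · rw [Finset.sum_mul]
      exact Finset.sum_eq_zero fun g _ => Geo.horth (τ := τ) w x hw _
        (subB (θ.act_mem g _ (mulE_mem _ _))) _ (eMem (θ := θ) (e := e) _)
  rw [lhs, traceX]
  have rhs : ∀ h : x ⟶ x,
      θ.act h ((∑ y, θ.act (Groupoid.inv (τ y)) (c * e (τ y))) * e (Groupoid.inv h))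
        = ∑ y, θ.act h (θ.act (Groupoid.inv (τ y)) (c * e (τ y)) * e (Groupoid.inv h)) := by
    intro h
    rw [Finset.sum_mul, actSum (e := e) Finset.univ _ h (fun y _ => mulE_mem _ _)]
  rw [Finset.sum_congr rfl fun h _ => rhs h, Finset.sum_comm]
  refine Finset.sum_congr rfl fun y _ => ?_
  rw [← Equiv.sum_comp (precompEquiv (r := x) (Groupoid.inv (τ y)))
    (fun g : y ⟶ x => θ.act g (c * e (Groupoid.inv g)))]
  refine Finset.sum_congr rfl fun h _ => ?_
  simp only [precompEquiv_apply]
  -- per-term identity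
  set g₀ : y ⟶ x := Groupoid.inv (τ y) ≫ h with hg₀
  have hctm : c * e (τ y) ∈ θ.D (Groupoid.inv (Groupoid.inv (τ y))) := by
    rw [ginv_inv]; exact mulE_mem _ _
  have hinvg₀ : Groupoid.inv g₀ = Groupoid.inv h ≫ τ y := by
    rw [hg₀, ginv_comp, ginv_inv]
  have step1 : θ.act (Groupoid.inv (τ y)) (c * e (τ y)) * e (Groupoid.inv h)
      = θ.act (Groupoid.inv (τ y)) (c * e (Groupoid.inv g₀)) := by
    rw [kmul (e := e) (Groupoid.inv (τ y)) hctm (e (Groupoid.inv h)),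
      gl4 (θ := θ) (e := e) (Groupoid.inv (τ y)) (Groupoid.inv h), ginv_inv (τ y), ← hinvg₀]
    -- c * e (τ y) * (e (τ y) * e (inv g₀)) = c * e (inv g₀)
    rw [mul_assoc, ← mul_assoc (e (τ y)), eIdem, eTau (θ := θ) (e := e) (τ := τ) y,
      eMul_of_mem (subB (eMem (θ := θ) (e := e) (Groupoid.inv g₀)))]
  rw [step1]
  have hm1 : c * e (Groupoid.inv g₀) ∈ θ.D (Groupoid.inv (Groupoid.inv (τ y))) := by
    rw [ginv_inv, Geo.hgt2 (θ := θ) (τ := τ) y]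
    exact subB (mulE_mem _ _)
  have hm2 : c * e (Groupoid.inv g₀) ∈ θ.D (Groupoid.inv (Groupoid.inv (τ y) ≫ h)) := by
    rw [← hg₀]; exact mulE_mem _ _
  rw [compAct (Groupoid.inv (τ y)) h hm1 hm2, ← hg₀]

include τ in
lemma projX {c' : A} (hc' : c' ∈ θ.D (𝟙 x)) :
    (∑ y, θ.act (Groupoid.inv (τ y)) (c' * e (τ y))) = c' := by
  rw [Finset.sum_eq_single_of_mem x (Finset.mem_univ x) (fun w _ hw => ?_)]
  · rw [Geo.hτx (θ := θ) (τ := τ), ginv_id,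
      θ.act_id x _ (mulE_mem _ _), mulE_of_mem hc']
  · rw [eTau (θ := θ) (e := e) (τ := τ) w,
      Geo.horth (τ := τ) x w (Ne.symm hw) c' hc' _ (eMem (θ := θ) (e := e) _),
      act0 (θ := θ)]

include τ in
lemma invX_of_invA {a : A} (ha : a ∈ invA θ e) (h : x ⟶ x) :
    θ.act h ((a * e (𝟙 x)) * e (Groupoid.inv h)) = (a * e (𝟙 x)) * e h := by
  simp only [invA, Set.mem_setOf_eq] at ha
  rw [mul_assoc, eMul_of_mem (subB (eMem (θ := θ) (e := e) (Groupoid.inv h))), ha h,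
    mul_assoc, eMul_of_mem (subB (eMem (θ := θ) (e := e) h))]

lemma ToffCore {y₀ z₀ y₁ : G} (g : y₁ ⟶ z₀) (h : y₀ ⟶ z₀) (m : ℕ) (a b : Fin m → A)
    (h0 : ∑ i, a i * θ.act (h ≫ Groupoid.inv g)
      (b i * e (Groupoid.inv (h ≫ Groupoid.inv g))) = 0) :
    ∑ i, θ.act g (a i * e (Groupoid.inv g)) * θ.act h (b i * e (Groupoid.inv h)) = 0 := by
  rw [Tformula (e := e) g h m a b, h0, zero_mul, act0 (θ := θ)]

lemma Tdiag {y₀ z₀ : G} (h : y₀ ⟶ z₀) (m : ℕ) (a b : Fin m → A)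
    (hid : ∑ i, a i * θ.act (𝟙 y₀) (b i * e (Groupoid.inv (𝟙 y₀))) = e (𝟙 y₀)) :
    ∑ i, θ.act h (a i * e (Groupoid.inv h)) * θ.act h (b i * e (Groupoid.inv h)) = e h := by
  rw [Tformula (e := e) h h m a b, gcomp_inv h, hid,
    mulE_of_mem (subB (eMem (θ := θ) (e := e) (Groupoid.inv h))),
    eMul_of_mem (subB (eMem (θ := θ) (e := e) (Groupoid.inv h))), actE]

include τ in
lemma Toff (p q : Mor G) (hpq : p ≠ q) (m : ℕ) (a b : Fin m → A)
    (hnid : ∀ {y z : G} (k : y ⟶ z), ¬ IsId k →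
      ∑ i, a i * θ.act k (b i * e (Groupoid.inv k)) = 0) :
    ∑ i, θ.act p.2.2 (a i * e (Groupoid.inv p.2.2)) *
      θ.act q.2.2 (b i * e (Groupoid.inv q.2.2)) = 0 := by
  obtain ⟨y₁, z₁, g⟩ := p
  obtain ⟨y₀, z₀, h⟩ := q
  simp only at *
  by_cases hz : z₁ = z₀
  · subst hz
    by_cases hy : y₀ = y₁
    · subst hy
      refine ToffCore g h m a b (hnid _ ?_)
      rintro ⟨hEq, hEqk⟩
      have hEqrfl : hEq = rfl := Subsingleton.elim _ _
      rw [hEqrfl, eqToHom_refl] at hEqk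
      have hgh : h = g := by
        have := congrArg (fun k => k ≫ g) hEqk
        simpa using this
      exact hpq (by rw [hgh])
    · exact ToffCore g h m a b (hnid _ (fun ⟨hEq, _⟩ => hy hEq))
  · refine Finset.sum_eq_zero fun i _ => ?_
    exact Geo.horth (τ := τ) z₁ z₀ hz _ (subB (θ.act_mem g _ (mulE_mem _ _)))
      _ (subB (θ.act_mem h _ (mulE_mem _ _)))

lemma impl_ii_i (hS : StrictA θ e) :
    GaloisA θ e ∧ ∀ a ∈ invA θ e, ∃ c : A, traceA θ e c = a := by
  constructor
  · classical
    set r : Mor G → A := fun p => if IsId p.2.2 then e p.2.2 else 0 with hr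
    have hrs : r ∈ skewSet θ := by
      intro p
      by_cases hp : IsId p.2.2
      · simp only [hr, if_pos hp]; exact eMem _
      · simp only [hr, if_neg hp]; exact Dzero (e := e) _
    obtain ⟨n, a, b, hab⟩ := hS.2 r hrs
    refine ⟨n, a, b, fun y => ?_, fun {y z} g hg => ?_⟩
    · have h0 := hab ⟨y, y, 𝟙 y⟩
      simp only [hr] at h0
      rw [if_pos ⟨rfl, by simp⟩] at h0
      exact h0.symm
    · have h0 := hab ⟨y, z, g⟩
      simp only [hr] at h0
      rw [if_neg hg] at h0
      exact h0.symm
  · intro a ha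
    obtain ⟨n, u, v, h⟩ := hS.1 a ha
    exact ⟨∑ i, u i * v i, by rw [traceA_sum]; exact h.symm⟩

lemma impl_iii_iv (hS : StrictX θ e x) :
    GaloisX θ e x ∧ ∀ a ∈ θ.D (𝟙 x), a ∈ invX θ e x →
      ∃ c ∈ θ.D (𝟙 x), traceX θ e x c = a := by
  constructor
  · classical
    set s : (x ⟶ x) → A := fun h => if h = 𝟙 x then e (𝟙 x) else 0 with hs
    have hss : ∀ h : x ⟶ x, s h ∈ θ.D h := by
      intro h
      by_cases hh : h = 𝟙 x
      · subst hh; simp only [hs, if_pos rfl]; exact eMem _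
      · simp only [hs, if_neg hh]; exact Dzero (e := e) _
    obtain ⟨n, a, b, hmem, hab⟩ := hS.2 s hss
    refine ⟨n, a, b, hmem, ?_, fun h hne => ?_⟩
    · have h0 := hab (𝟙 x)
      simp only [hs, if_pos rfl] at h0
      exact h0.symm
    · have h0 := hab h
      simp only [hs, if_neg hne] at h0
      exact h0.symm
  · intro a haD hainv
    obtain ⟨n, u, v, hmem, h⟩ := hS.1 a haD hainv
    refine ⟨∑ i, u i * v i, Dsum (e := e) (fun i _ => DmulR (e := e) (hmem i).1 _), ?_⟩
    rw [traceX_sum]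
    exact h.symm

include τ in
lemma impl_i_ii (hG : GaloisA θ e) (ht : ∀ a ∈ invA θ e, ∃ c : A, traceA θ e c = a) :
    StrictA θ e := by
  obtain ⟨m, a, b, hid, hnid⟩ := hG
  constructor
  · intro a₀ ha₀
    obtain ⟨c, hc⟩ := ht a₀ ha₀
    obtain ⟨f, hf, hsum⟩ := Geo.hspan (θ := θ) (x := x) (τ := τ) c
    refine ⟨Fintype.card G, fun i => f ((Fintype.equivFin G).symm i),
      fun i => e (𝟙 ((Fintype.equivFin G).symm i)), ?_⟩
    calc a₀ = traceA θ e c := hc.symm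
      _ = ∑ y, traceA θ e (f y) := by rw [hsum, traceA_sum]
      _ = ∑ i : Fin (Fintype.card G), traceA θ e (f ((Fintype.equivFin G).symm i)) :=
          (Equiv.sum_comp (Fintype.equivFin G).symm (fun y => traceA θ e (f y))).symm
      _ = ∑ i : Fin (Fintype.card G),
            traceA θ e (f ((Fintype.equivFin G).symm i) * e (𝟙 ((Fintype.equivFin G).symm i))) :=
          Finset.sum_congr rfl fun i _ => by rw [mulE_of_mem (hf _)]
  · intro r hrs
    classical
    refine ⟨Fintype.card (Mor G × Fin m),
      fun j => r ((Fintype.equivFin (Mor G × Fin m)).symm j).1 *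
        θ.act ((Fintype.equivFin (Mor G × Fin m)).symm j).1.2.2
          (a ((Fintype.equivFin (Mor G × Fin m)).symm j).2 *
            e (Groupoid.inv ((Fintype.equivFin (Mor G × Fin m)).symm j).1.2.2)),
      fun j => b ((Fintype.equivFin (Mor G × Fin m)).symm j).2, ?_⟩
    intro q
    rw [Equiv.sum_comp (Fintype.equivFin (Mor G × Fin m)).symm
      (fun pi : Mor G × Fin m => r pi.1 * θ.act pi.1.2.2 (a pi.2 * e (Groupoid.inv pi.1.2.2)) *
        θ.act q.2.2 (b pi.2 * e (Groupoid.inv q.2.2)))]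
    rw [Fintype.sum_prod_type]
    have hre : ∀ p : Mor G,
        (∑ i, r p * θ.act p.2.2 (a i * e (Groupoid.inv p.2.2)) *
          θ.act q.2.2 (b i * e (Groupoid.inv q.2.2)))
        = r p * ∑ i, θ.act p.2.2 (a i * e (Groupoid.inv p.2.2)) *
            θ.act q.2.2 (b i * e (Groupoid.inv q.2.2)) := by
      intro p
      rw [Finset.mul_sum]
      exact Finset.sum_congr rfl fun i _ => mul_assoc _ _ _
    rw [Finset.sum_congr rfl fun p _ => hre p,
      Finset.sum_eq_single_of_mem q (Finset.mem_univ q) (fun p _ hpq => by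
        rw [Toff (τ := τ) (e := e) p q hpq m a b hnid, mul_zero]),
      Tdiag (e := e) q.2.2 m a b (hid _), mulE_of_mem (hrs q)]

include τ in
lemma impl_iv_iii (hG : GaloisX θ e x)
    (ht : ∀ a ∈ θ.D (𝟙 x), a ∈ invX θ e x → ∃ c ∈ θ.D (𝟙 x), traceX θ e x c = a) :
    StrictX θ e x := by
  obtain ⟨m, a, b, hmem, hid, hnid⟩ := hG
  constructor
  · intro a₀ hD hinv
    obtain ⟨c, hcD, hc⟩ := ht a₀ hD hinv
    refine ⟨1, fun _ => c, fun _ => e (𝟙 x), fun i => ⟨hcD, eMem _⟩, ?_⟩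
    rw [Fin.sum_univ_one, mulE_of_mem hcD]
    exact hc.symm
  · intro s hs
    classical
    refine ⟨Fintype.card ((x ⟶ x) × Fin m),
      fun j => s ((Fintype.equivFin ((x ⟶ x) × Fin m)).symm j).1 *
        θ.act ((Fintype.equivFin ((x ⟶ x) × Fin m)).symm j).1
          (a ((Fintype.equivFin ((x ⟶ x) × Fin m)).symm j).2 *
            e (Groupoid.inv ((Fintype.equivFin ((x ⟶ x) × Fin m)).symm j).1)),
      fun j => b ((Fintype.equivFin ((x ⟶ x) × Fin m)).symm j).2, fun j => ?_, ?_⟩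
    · exact ⟨DmulL (e := e) (subB (θ.act_mem _ _ (mulE_mem _ _))) _, (hmem _).2⟩
    · intro h
      rw [Equiv.sum_comp (Fintype.equivFin ((x ⟶ x) × Fin m)).symm
        (fun gi : (x ⟶ x) × Fin m => s gi.1 * θ.act gi.1 (a gi.2 * e (Groupoid.inv gi.1)) *
          θ.act h (b gi.2 * e (Groupoid.inv h)))]
      rw [Fintype.sum_prod_type]
      have hre : ∀ g : x ⟶ x,
          (∑ i, s g * θ.act g (a i * e (Groupoid.inv g)) *
            θ.act h (b i * e (Groupoid.inv h)))
          = s g * ∑ i, θ.act g (a i * e (Groupoid.inv g)) *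
              θ.act h (b i * e (Groupoid.inv h)) := by
        intro g
        rw [Finset.mul_sum]
        exact Finset.sum_congr rfl fun i _ => mul_assoc _ _ _
      rw [Finset.sum_congr rfl fun g _ => hre g,
        Finset.sum_eq_single_of_mem h (Finset.mem_univ h) (fun g _ hgh => ?_),
        Tdiag (e := e) h m a b hid, mulE_of_mem (hs h)]
      have hne : h ≫ Groupoid.inv g ≠ 𝟙 x := by
        intro hk
        apply hgh
        have := congrArg (fun k => k ≫ g) hk
        simpa using this.symm
      rw [ToffCore (e := e) g h m a b (hnid _ hne), mul_zero]

include τ in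
lemma impl_i_iv (hG : GaloisA θ e) (ht : ∀ a ∈ invA θ e, ∃ c : A, traceA θ e c = a) :
    GaloisX θ e x ∧ ∀ a ∈ θ.D (𝟙 x), a ∈ invX θ e x →
      ∃ c ∈ θ.D (𝟙 x), traceX θ e x c = a := by
  constructor
  · obtain ⟨m, a, b, hid, hnid⟩ := hG
    refine ⟨m, fun i => a i * e (𝟙 x), fun i => b i * e (𝟙 x),
      fun i => ⟨mulE_mem _ _, mulE_mem _ _⟩, ?_, ?_⟩
    · have hterm : ∀ i, (a i * e (𝟙 x)) *
          θ.act (𝟙 x) ((b i * e (𝟙 x)) * e (Groupoid.inv (𝟙 x)))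
          = a i * θ.act (𝟙 x) (b i * e (Groupoid.inv (𝟙 x))) := by
        intro i
        rw [ginv_id, mul_assoc (b i), eIdem, θ.act_id x _ (mulE_mem _ _),
          ePull (𝟙 x) (a i), mul_assoc (a i), mul_assoc (b i), eIdem]
      rw [Finset.sum_congr rfl fun i _ => hterm i, hid x]
    · intro h hne
      have hIsId : ¬ IsId h := by
        rintro ⟨hEq, hk⟩
        have : hEq = rfl := Subsingleton.elim _ _
        rw [this, eqToHom_refl] at hk
        exact hne hk
      have hterm : ∀ i, (a i * e (𝟙 x)) *
          θ.act h ((b i * e (𝟙 x)) * e (Groupoid.inv h))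
          = a i * θ.act h (b i * e (Groupoid.inv h)) := by
        intro i
        have hb : (b i * e (𝟙 x)) * e (Groupoid.inv h) = b i * e (Groupoid.inv h) := by
          rw [mul_assoc, eMul_of_mem (subB (eMem (θ := θ) (e := e) (Groupoid.inv h)))]
        rw [hb, mul_assoc, eMul_of_mem (subB (θ.act_mem h _ (mulE_mem _ _)))]
      rw [Finset.sum_congr rfl fun i _ => hterm i, hnid h hIsId]
  · intro a haD hainv
    simp only [invX, Set.mem_setOf_eq] at hainv
    have hGinv : (∑ y, θ.act (τ y) a) ∈ invA θ e := invA_of_invX (τ := τ) haD hainv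
    obtain ⟨c, hc⟩ := ht _ hGinv
    have hSx : (∑ y, θ.act (τ y) a) * e (𝟙 x) = a := by
      rw [Finset.sum_mul, sumOrthL (τ := τ) _
        (fun w => subB (θ.act_mem _ _ (by rw [Geo.hgt1 (θ := θ) (τ := τ) w]; exact haD)))
        (eMem (θ := θ) (e := e) (𝟙 x)), Geo.hτx (θ := θ) (τ := τ),
        θ.act_id x a haD, mulE_of_mem haD]
    refine ⟨∑ y, θ.act (Groupoid.inv (τ y)) (c * e (τ y)), ?_, ?_⟩
    · refine Dsum (e := e) fun y _ => ?_
      rw [← Geo.hgt1 (θ := θ) (τ := τ) y]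
      exact θ.act_mem _ _ (by rw [ginv_inv]; exact mulE_mem _ _)
    · rw [← traceA_restrict (τ := τ) c, hc, hSx]

include τ in
lemma impl_iv_i (hG : GaloisX θ e x)
    (ht : ∀ a ∈ θ.D (𝟙 x), a ∈ invX θ e x → ∃ c ∈ θ.D (𝟙 x), traceX θ e x c = a) :
    GaloisA θ e ∧ ∀ a ∈ invA θ e, ∃ c : A, traceA θ e c = a := by
  constructor
  · obtain ⟨m, a, b, hmem, hid, hnid⟩ := hG
    classical
    have hbD : ∀ (i) (w : G), b i ∈ θ.D (Groupoid.inv (τ w)) := fun i w => by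
      rw [Geo.hgt1 (θ := θ) (τ := τ) w]; exact (hmem i).2
    have haD : ∀ (i) (w : G), a i ∈ θ.D (Groupoid.inv (τ w)) := fun i w => by
      rw [Geo.hgt1 (θ := θ) (τ := τ) w]; exact (hmem i).1
    -- cross-object terms vanish
    have helper1 : ∀ {y' z : G} (g : y' ⟶ z), y' ≠ z →
        (∑ w, ∑ i, θ.act (τ w) (a i) *
          θ.act g (θ.act (τ w) (b i) * e (Groupoid.inv g))) = 0 := by
      intro y' z g hne
      refine Finset.sum_eq_zero fun w _ => Finset.sum_eq_zero fun i _ => ?_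
      by_cases hw : w = y'
      · subst hw
        exact Geo.horth (τ := τ) w z hne _ (subB (θ.act_mem _ _ (haD i w)))
          _ (subB (θ.act_mem g _ (mulE_mem _ _)))
      · rw [Geo.horth (τ := τ) w y' hw _ (subB (θ.act_mem _ _ (hbD i w)))
          _ (subB (eMem (θ := θ) (e := e) (Groupoid.inv g))), act0 (θ := θ), mul_zero]
    -- endomorphism terms reduce to the isotropy Galois sum
    have helper2 : ∀ {z : G} (g : z ⟶ z),
        (∑ w, ∑ i, θ.act (τ w) (a i) *
          θ.act g (θ.act (τ w) (b i) * e (Groupoid.inv g)))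
        = θ.act (τ z) (∑ i, a i * θ.act ((τ z ≫ g) ≫ Groupoid.inv (τ z))
            (b i * e (Groupoid.inv ((τ z ≫ g) ≫ Groupoid.inv (τ z))))) := by
      intro z g
      rw [Finset.sum_eq_single_of_mem z (Finset.mem_univ z)
        (fun w _ hw => Finset.sum_eq_zero fun i _ => by
          rw [Geo.horth (τ := τ) w z hw _ (subB (θ.act_mem _ _ (hbD i w)))
            _ (subB (eMem (θ := θ) (e := e) (Groupoid.inv g))), act0 (θ := θ), mul_zero])]
      set h₀ : x ⟶ x := (τ z ≫ g) ≫ Groupoid.inv (τ z) with hh₀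
      have hcomp : h₀ ≫ τ z = τ z ≫ g := by rw [hh₀]; simp
      have hv1z : θ.D (Groupoid.inv (τ z)) = θ.D (𝟙 x) := Geo.hgt1 (θ := θ) (τ := τ) z
      have hv2z : θ.D (Groupoid.inv (Groupoid.inv (τ z))) = θ.D (𝟙 z) := by
        rw [ginv_inv]; exact Geo.hgt2 (θ := θ) (τ := τ) z
      have hinvexp : Groupoid.inv (τ z ≫ g) = Groupoid.inv (τ z) ≫ Groupoid.inv h₀ := by
        rw [← hcomp, ginv_comp]
      have hDeq : θ.D (Groupoid.inv (τ z ≫ g)) = θ.D (Groupoid.inv h₀) := by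
        rw [hinvexp]; exact glD _ hv1z hv2z _
      have hEeq : e (Groupoid.inv (τ z ≫ g)) = e (Groupoid.inv h₀) := by
        rw [hinvexp]; exact glE _ hv1z hv2z _
      have hterm : ∀ i, θ.act (τ z) (a i) *
          θ.act g (θ.act (τ z) (b i) * e (Groupoid.inv g))
          = θ.act (τ z) (a i * θ.act h₀ (b i * e (Groupoid.inv h₀))) := by
        intro i
        have s1 : θ.act (τ z) (b i) * e (Groupoid.inv g)
            = θ.act (τ z) (b i * e (Groupoid.inv h₀)) := by
          rw [kmul (e := e) (τ z) (hbD i z) (e (Groupoid.inv g)),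
            gl4 (θ := θ) (e := e) (τ z) (Groupoid.inv g), ← ginv_comp, hEeq,
            ← mul_assoc, mulE_of_mem (hbD i z)]
        have hm1 : b i * e (Groupoid.inv h₀) ∈ θ.D (Groupoid.inv (τ z)) := by
          rw [Geo.hgt1 (θ := θ) (τ := τ) z]; exact DmulR (e := e) ((hmem i).2) _
        have hm2 : b i * e (Groupoid.inv h₀) ∈ θ.D (Groupoid.inv (τ z ≫ g)) := by
          rw [hDeq]; exact mulE_mem _ _
        have s2 := compAct (τ z) g hm1 hm2
        have hm3 : b i * e (Groupoid.inv h₀) ∈ θ.D (Groupoid.inv h₀) := mulE_mem _ _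
        have hm4 : b i * e (Groupoid.inv h₀) ∈ θ.D (Groupoid.inv (h₀ ≫ τ z)) := by
          rw [hcomp]; exact hm2
        have s3 := compAct h₀ (τ z) hm3 hm4
        have hQ : θ.act h₀ (b i * e (Groupoid.inv h₀)) ∈ θ.D (Groupoid.inv (τ z)) := by
          rw [Geo.hgt1 (θ := θ) (τ := τ) z]; exact subB (θ.act_mem _ _ hm3)
        rw [s1, s2, ← hcomp, ← s3, ← θ.act_mul (τ z) _ (haD i z) _ hQ]
      rw [Finset.sum_congr rfl fun i _ => hterm i,
        ← actSum (e := e) Finset.univ _ (τ z) (fun i _ => DmulL (e := e)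
          (by rw [Geo.hgt1 (θ := θ) (τ := τ) z]
              exact subB (θ.act_mem _ _ (mulE_mem _ _))) _)]
    refine ⟨Fintype.card (G × Fin m),
      fun j => θ.act (τ ((Fintype.equivFin (G × Fin m)).symm j).1)
        (a ((Fintype.equivFin (G × Fin m)).symm j).2),
      fun j => θ.act (τ ((Fintype.equivFin (G × Fin m)).symm j).1)
        (b ((Fintype.equivFin (G × Fin m)).symm j).2), fun y => ?_, ?_⟩
    · -- identity case
      rw [Equiv.sum_comp (Fintype.equivFin (G × Fin m)).symm
        (fun wi : G × Fin m => θ.act (τ wi.1) (a wi.2) *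
          θ.act (𝟙 y) (θ.act (τ wi.1) (b wi.2) * e (Groupoid.inv (𝟙 y)))),
        Fintype.sum_prod_type, helper2 (𝟙 y)]
      have hone : (τ y ≫ 𝟙 y) ≫ Groupoid.inv (τ y) = 𝟙 x := by simp
      rw [hone, hid]
      show θ.act (τ y) (e (𝟙 x)) = e (𝟙 y)
      rw [← eTauInv (θ := θ) (e := e) (τ := τ) y, actE, eTau (θ := θ) (e := e) (τ := τ) y]
    · -- non-identity case
      intro y' z g hg
      rw [Equiv.sum_comp (Fintype.equivFin (G × Fin m)).symm
        (fun wi : G × Fin m => θ.act (τ wi.1) (a wi.2) *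
          θ.act g (θ.act (τ wi.1) (b wi.2) * e (Groupoid.inv g))),
        Fintype.sum_prod_type]
      by_cases hyz : y' = z
      · subst hyz
        have hne : (τ y' ≫ g) ≫ Groupoid.inv (τ y') ≠ 𝟙 x := by
          intro hk
          apply hg
          have h1 : ((τ y' ≫ g) ≫ Groupoid.inv (τ y')) ≫ τ y' = 𝟙 x ≫ τ y' := by rw [hk]
          simp only [Category.assoc, Groupoid.inv_comp, Category.comp_id,
            Category.id_comp] at h1
          have h2 : Groupoid.inv (τ y') ≫ τ y' ≫ g = Groupoid.inv (τ y') ≫ τ y' := by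
            rw [h1]
          simp only [← Category.assoc, Groupoid.inv_comp, Category.id_comp] at h2
          exact ⟨rfl, by rw [h2]; simp⟩
        rw [helper2 g, hnid _ hne, act0 (θ := θ)]
      · exact helper1 g hyz
  · intro a ha
    have haX : a * e (𝟙 x) ∈ θ.D (𝟙 x) := mulE_mem _ _
    have hinvX : a * e (𝟙 x) ∈ invX θ e x := by
      simp only [invX, Set.mem_setOf_eq]
      exact invX_of_invA (τ := τ) ha
    obtain ⟨c', hc'D, hc'⟩ := ht _ haX hinvX
    refine ⟨c', inv_ext (τ := τ) (traceA_inv (τ := τ) c') ha ?_⟩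
    rw [traceA_restrict (τ := τ) c', projX (τ := τ) hc'D, hc']

end Proof

/-!
STATEMENT 17: Under the standing hypotheses (𝒢 connected finite groupoid, θ = Ext(γ)
unital — encoded by the group-type hypotheses hgt1, hgt2 —, A = ⊕_{y∈𝒢₀} B_y; the
module structures of A over A^θ and of B_x over B_x^{θ_{(x)}} are the evident ones by
multiplication), the following are equivalent:
(i)  A is a θ-partial Galois extension of A^θ and t_θ : A → A^θ is surjective;
(ii) the Morita context (A^θ, A⋆_θ𝒢, A, A, Γ, Γ') is strict;
(iii) the Morita context (B_x^{θ_{(x)}}, B_x ⋆_{θ_{(x)}} 𝒢(x), B_x, B_x, Γ_x, Γ'_x)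
is strict;
(iv) B_x is a partial Galois extension of B_x^{θ_{(x)}} and t_{θ_{(x)}} is surjective.
-/
theorem extension_partial_actions_stmt17
    {G : Type v} [Groupoid G] {A : Type u} [NonUnitalRing A]
    [Fintype G] [∀ y z : G, Fintype (y ⟶ z)]
    (hconn : ∀ a b : G, Nonempty (a ⟶ b))
    (x : G) (τ : ∀ y : G, x ⟶ y) (hτx : τ x = 𝟙 x)
    (θ : PartialAction G A)
    (e : ∀ {y z : G}, (y ⟶ z) → A)
    (he_idem : ∀ {y z : G} (g : y ⟶ z), e g * e g = e g)
    (he_cent : ∀ {y z : G} (g : y ⟶ z) (b : A), e g * b = b * e g)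
    (hDe : ∀ {y z : G} (g : y ⟶ z), θ.D g = {a : A | ∃ b : A, a = b * e g})
    (hgt1 : ∀ y : G, θ.D (Groupoid.inv (τ y)) = θ.D (𝟙 x))
    (hgt2 : ∀ y : G, θ.D (τ y) = θ.D (𝟙 y))
    (horth : ∀ y z : G, y ≠ z → ∀ a ∈ θ.D (𝟙 y), ∀ b ∈ θ.D (𝟙 z), a * b = 0)
    (hspan : ∀ a : A, ∃ f : G → A, (∀ y : G, f y ∈ θ.D (𝟙 y)) ∧ a = ∑ y : G, f y) :
    ((GaloisA θ e ∧ ∀ a ∈ invA θ e, ∃ c : A, traceA θ e c = a) ↔ StrictA θ e) ∧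
    (StrictA θ e ↔ StrictX θ e x) ∧
    (StrictX θ e x ↔
      (GaloisX θ e x ∧ ∀ a ∈ θ.D (𝟙 x), a ∈ invX θ e x →
        ∃ c ∈ θ.D (𝟙 x), traceX θ e x c = a)) := by
  haveI : Ex (A := A) (G := G) e := ⟨@he_idem, @he_cent⟩
  haveI : DGen θ e := ⟨@hDe⟩
  haveI : Geo θ x τ := ⟨hτx, hgt1, hgt2, horth, hspan⟩
  refine ⟨⟨fun h => impl_i_ii (τ := τ) h.1 h.2, fun h => impl_ii_i h⟩, ?_, ?_⟩
  · constructor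
    · intro hA
      have hi := impl_ii_i hA
      have hiv := impl_i_iv (τ := τ) hi.1 hi.2
      exact impl_iv_iii (τ := τ) hiv.1 hiv.2
    · intro hX
      have hiv := impl_iii_iv hX
      have hi := impl_iv_i (τ := τ) hiv.1 hiv.2
      exact impl_i_ii (τ := τ) hi.1 hi.2
  · exact ⟨fun hX => impl_iii_iv hX, fun h => impl_iv_iii (τ := τ) h.1 h.2⟩
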